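/- Let k be an algebraically closed field, and let X be a smooth sextic hypersurface V(f) in P_k(1,1,2,3) with char k ≠ 2 and f = w^2 - b(x,y,z). Let Γ = V(z - Q(x,y), w - C(x,y)) and Γ' = V(z - Q(x,y), w + C(x,y)), where Q and C are binary forms of degrees 2 and 3. If Γ is a divisor on X, then Γ' is also a divisor on X and the intersection number (Γ, Γ')_X equals 3. -/

import Mathlib

open MvPolynomial

noncomputable section

variable {k : Type*}

section Aux1
variable [CommRing k]

/-- substitution retraction: `p - aeval G p` lies in any ideal containing the `X i - G i`. -/
lemma aux_sub_aeval_mem {σ : Type*} (G : σ → MvPolynomial σ k)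
    (J : Ideal (MvPolynomial σ k)) (hG : ∀ i, X i - G i ∈ J)
    (p : MvPolynomial σ k) : p - aeval G p ∈ J := by
  induction p using MvPolynomial.induction_on with
  | C a => simp only [aeval_C, algebraMap_eq, sub_self]; exact J.zero_mem
  | add p q hp hq =>
      rw [map_add]
      have := J.add_mem hp hq
      have h2 : p + q - (aeval G p + aeval G q) = p - aeval G p + (q - aeval G q) := by ring
      rw [h2]; exact this
  | mul_X p i hp =>
      rw [map_mul, aeval_X]
      have h2 : p * X i - aeval G p * G i
          = p * (X i - G i) + (p - aeval G p) * G i := by ring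
      rw [h2]
      exact J.add_mem (J.mul_mem_left _ (hG i)) (J.mul_mem_right _ hp)

/-- substituting weighted homogeneous values into a weighted homogeneous polynomial. -/
lemma aux_aeval_wh {σ τ : Type*} {w : σ → ℕ} {w' : τ → ℕ}
    {p : MvPolynomial σ k} {d : ℕ} (hp : p.IsWeightedHomogeneous w d)
    (g : σ → MvPolynomial τ k) (hg : ∀ i, (g i).IsWeightedHomogeneous w' (w i)) :
    (aeval g p).IsWeightedHomogeneous w' d := by
  haveI := WeightedHomogeneousSubmodule.gradedMonoid (R := k) (w := w')
  rw [aeval_def, eval₂_eq]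
  rw [← mem_weightedHomogeneousSubmodule]
  apply Submodule.sum_mem
  intro s hs
  have hws : Finsupp.weight w s = d := hp (mem_support_iff.mp hs)
  have h2 : (∏ i ∈ s.support, g i ^ s i) ∈
      weightedHomogeneousSubmodule k w' (∑ i ∈ s.support, s i • w i) :=
    SetLike.prod_pow_mem_graded _ _ _ _ (fun i _ => hg i)
  have h3 := (isWeightedHomogeneous_C w' (coeff s p)).mul
    ((mem_weightedHomogeneousSubmodule _ _ _ _).mp h2)
  rw [zero_add] at h3
  have h4 : (∑ i ∈ s.support, s i • w i) = d := by
    rw [← hws, Finsupp.weight_apply]; rfl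
  rw [h4] at h3
  rw [mem_weightedHomogeneousSubmodule, algebraMap_eq]
  exact h3

/-- graded piece of a product with a weighted homogeneous factor. -/
lemma aux_component_mul {σ : Type*} {w : σ → ℕ} {a : MvPolynomial σ k} {m : ℕ}
    (ha : a.IsWeightedHomogeneous w m) (q : MvPolynomial σ k) (e : ℕ) :
    weightedHomogeneousComponent w (m + e) (a * q)
      = a * weightedHomogeneousComponent w e q := by
  classical
  ext s
  rw [coeff_weightedHomogeneousComponent, coeff_mul, coeff_mul]
  by_cases hsw : Finsupp.weight w s = m + e
  · rw [if_pos hsw]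
    apply Finset.sum_congr rfl
    rintro ⟨u, v⟩ huv
    rw [Finset.HasAntidiagonal.mem_antidiagonal] at huv
    by_cases hu : coeff u a = 0
    · simp [hu]
    · have hadd : Finsupp.weight w u + Finsupp.weight w v = m + e := by
        rw [← map_add, huv, hsw]
      have hwu : Finsupp.weight w u = m := ha hu
      have hv : Finsupp.weight w v = e := by omega
      rw [coeff_weightedHomogeneousComponent, if_pos hv]
  · rw [if_neg hsw]
    symm; apply Finset.sum_eq_zero
    rintro ⟨u, v⟩ huv
    rw [Finset.HasAntidiagonal.mem_antidiagonal] at huv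
    by_cases hu : coeff u a = 0
    · simp [hu]
    · rw [coeff_weightedHomogeneousComponent, if_neg, mul_zero]
      intro hv
      exact hsw (by rw [← huv, map_add, ha hu, hv])

end Aux1

section Aux2
variable [Field k]

lemma aux_deg_two (s : Fin 2 →₀ ℕ) : Finsupp.degree s = s 0 + s 1 := by
  have h : Finsupp.degree s = ∑ i : Fin 2, s i := by
    rw [Finsupp.degree]
    apply Finset.sum_subset (Finset.subset_univ _)
    intro i _ hi
    exact Finsupp.notMem_support_iff.mp hi
  rw [h, Fin.sum_univ_two]

/-- the exponents of binary monomials of degree `m` are in bijection with `Fin (m+1)`. -/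
def auxDegEquiv (m : ℕ) : ↥{d : Fin 2 →₀ ℕ | Finsupp.degree d = m} ≃ Fin (m + 1) where
  toFun s := ⟨s.1 0, Nat.lt_succ_of_le (by
    have h1 := Finsupp.le_degree (0 : Fin 2) s.1
    have h2 : Finsupp.degree s.1 = m := s.2
    omega)⟩
  invFun i := ⟨Finsupp.single 0 (i : ℕ) + Finsupp.single 1 (m - (i : ℕ)), by
    have h : Finsupp.degree (Finsupp.single (0 : Fin 2) (i : ℕ) + Finsupp.single 1 (m - (i : ℕ)))
        = (i : ℕ) + (m - (i : ℕ)) := by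
      rw [aux_deg_two]
      simp [Finsupp.single_apply]
    have hi := i.is_lt
    simp only [Set.mem_setOf_eq, h]
    omega⟩
  left_inv s := by
    apply Subtype.ext
    ext j
    have h2 : Finsupp.degree s.1 = m := s.2
    rw [aux_deg_two] at h2
    fin_cases j <;> simp [Finsupp.single_apply] <;> omega
  right_inv i := by
    apply Fin.ext
    simp [Finsupp.single_apply]

/-- basis of the space of binary forms of degree `m`. -/
def auxBasis (m : ℕ) : Module.Basis (Fin (m + 1)) k (homogeneousSubmodule (Fin 2) k m) :=
  ((basisRestrictSupport k _).map
    (LinearEquiv.ofEq _ _ (homogeneousSubmodule_eq_finsupp_supported (Fin 2) k m)).symm).reindex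
    (auxDegEquiv m)

lemma aux_findim (m : ℕ) : FiniteDimensional k (homogeneousSubmodule (Fin 2) k m) :=
  Module.Finite.of_basis (auxBasis m)

lemma aux_finrank (m : ℕ) :
    Module.finrank k (homogeneousSubmodule (Fin 2) k m) = m + 1 := by
  rw [Module.finrank_eq_card_basis (auxBasis (k := k) m), Fintype.card_fin]

lemma aux_aeval_eq_eval {σ : Type*} (f : σ → k) (x : MvPolynomial σ k) :
    MvPolynomial.aeval f x = MvPolynomial.eval f x := by
  rw [← MvPolynomial.coe_aeval_eq_eval]; rfl

lemma aux_eval_smul {σ : Type*} {φ : MvPolynomial σ k} {n : ℕ}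
    (hφ : φ.IsHomogeneous n) (r : k) (p : σ → k) :
    eval (fun i => r * p i) φ = r ^ n * eval p φ := by
  rw [eval_eq, eval_eq, Finset.mul_sum]
  apply Finset.sum_congr rfl
  intro d hd
  have hdeg : ∑ i ∈ d.support, d i = n := by
    have h1 := hφ (mem_support_iff.mp hd)
    have h2 : Finsupp.degree d = Finsupp.weight 1 d := by
      rw [Finsupp.degree_eq_weight_one]; rfl
    have h3 : Finsupp.degree d = ∑ i ∈ d.support, d i := rfl
    rw [← h3, h2, h1]
  have h : (∏ i ∈ d.support, (r * p i) ^ d i)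
      = r ^ n * ∏ i ∈ d.support, p i ^ d i := by
    rw [← hdeg, ← Finset.prod_pow_eq_pow_sum, ← Finset.prod_mul_distrib]
    apply Finset.prod_congr rfl
    intro i _
    rw [mul_pow]
  rw [h]; ring

lemma aux_eval_pair (φ : MvPolynomial (Fin 2) k) (a b : k) (g : Fin 2 → Polynomial k)
    (t : k) (h0 : (g 0).eval t = a) (h1 : (g 1).eval t = b) :
    Polynomial.eval t (MvPolynomial.aeval g φ) = eval ![a, b] φ := by
  have hc : (Polynomial.aeval t : Polynomial k →ₐ[k] k).comp (MvPolynomial.aeval g)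
      = MvPolynomial.aeval ![a, b] := by
    apply MvPolynomial.algHom_ext
    intro i
    fin_cases i <;> simp [Polynomial.aeval_def, Polynomial.eval₂_eq_eval_map, h0, h1]
  have h2 : Polynomial.aeval t (MvPolynomial.aeval g φ) = MvPolynomial.aeval ![a, b] φ := by
    rw [← hc]; rfl
  rw [← Polynomial.coe_aeval_eq_eval, h2]
  rw [← MvPolynomial.coe_aeval_eq_eval]
  rfl

/-- a binary form of positive degree over an algebraically closed field has a nontrivial zero. -/
lemma aux_root [IsAlgClosed k] {φ : MvPolynomial (Fin 2) k} {n : ℕ} (hn : 0 < n)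
    (hφ : φ.IsHomogeneous n) : ∃ p : Fin 2 → k, p ≠ 0 ∧ eval p φ = 0 := by
  by_contra hcon
  push_neg at hcon
  have h10 : (![(1:k), 0] : Fin 2 → k) ≠ 0 := by
    intro h; have := congrFun h 0; simp at this
  set u : Polynomial k := MvPolynomial.aeval ![Polynomial.X, 1] φ with hu
  have hueval : ∀ t : k, u.eval t = eval ![t, 1] φ := by
    intro t; apply aux_eval_pair <;> simp
  have hunoroot : ∀ t : k, u.eval t ≠ 0 := by
    intro t ht
    refine hcon ![t, 1] ?_ (by rw [← hueval]; exact ht)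
    intro h; have := congrFun h 1; simp at this
  have hune : u ≠ 0 := fun h => hunoroot 0 (by rw [h]; simp)
  have hudeg : u.degree = 0 := by
    by_contra hd
    obtain ⟨t, ht⟩ := IsAlgClosed.exists_root u hd
    exact hunoroot t ht
  set c : k := u.coeff 0 with hcdef
  have huc : u = Polynomial.C c := Polynomial.eq_C_of_degree_le_zero (le_of_eq hudeg)
  set q : Polynomial k := MvPolynomial.aeval ![1, Polynomial.X] φ with hq
  have hqeval : ∀ s : k, q.eval s = eval ![1, s] φ := by
    intro s; apply aux_eval_pair <;> simp
  have hkey : ∀ s : k, s ≠ 0 → q.eval s = c * s ^ n := by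
    intro s hs
    have h1 : (![(1:k), s] : Fin 2 → k) = fun i => s * (![s⁻¹, 1] i) := by
      funext i; fin_cases i <;> simp [hs]
    rw [hqeval, h1, aux_eval_smul hφ]
    have h2 : eval ![s⁻¹, 1] φ = u.eval s⁻¹ := (hueval s⁻¹).symm
    rw [h2, huc]
    simp [mul_comm]
  have hqeq : q = Polynomial.C c * Polynomial.X ^ n := by
    have hinf : Set.Infinite {x : k | (q - Polynomial.C c * Polynomial.X ^ n).IsRoot x} := by
      apply Set.Infinite.mono (s := {(0:k)}ᶜ)
      · intro x hx
        simp only [Set.mem_setOf_eq, Polynomial.IsRoot, Polynomial.eval_sub,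
          Polynomial.eval_mul, Polynomial.eval_C, Polynomial.eval_pow, Polynomial.eval_X]
        rw [hkey x hx]; ring
      · exact (Set.finite_singleton 0).infinite_compl
    have h := Polynomial.eq_zero_of_infinite_isRoot _ hinf
    exact sub_eq_zero.mp h
  have hfin : eval ![1, 0] φ = 0 := by
    rw [← hqeval 0, hqeq]
    simp [zero_pow hn.ne']
  exact hcon ![(1:k), 0] h10 hfin

end Aux2

end

noncomputable section

/-- The dimension of the degree-`d` graded piece (for the weights `1,1,2,3` on `x,y,z,w`)
of the quotient of `k[x,y,z,w]` by the homogeneous ideal `I`; for `d` large this is the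
degree of the closed subscheme of `P_k(1,1,2,3)` cut out by `I`. -/
def pieceRank (k : Type*) [Field k] (I : Ideal (MvPolynomial (Fin 4) k)) (d : ℕ) : ℕ :=
  Module.finrank k
    (↥(weightedHomogeneousSubmodule k ![1, 1, 2, 3] d) ⧸
      (Submodule.comap (weightedHomogeneousSubmodule k ![1, 1, 2, 3] d).subtype
        (I.restrictScalars k)))

/-- Let `k` be algebraically closed of characteristic `≠ 2` and let
`X = V(w² - b(x,y,z))` be a smooth sextic in `P_k(1,1,2,3)` (a del Pezzo surface of
degree 1).  Let `Γ = V(z - Q, w - C)` and `Γ' = V(z - Q, w + C)` with `Q, C` binary forms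
of degrees 2, 3.  If `Γ` is a divisor on `X`, then so is `Γ'`, and the intersection number
`(Γ,Γ')_X` — the degree of the intersection scheme, whose ideal is `(z - Q, w, C)` —
equals 3. -/
theorem stmt_1 (k : Type*) [Field k] [IsAlgClosed k] (hchar : ringChar k ≠ 2)
    (b : MvPolynomial (Fin 3) k)
    (hb : MvPolynomial.IsWeightedHomogeneous ![1, 1, 2] b 6)
    (hsmooth : ∀ P : Fin 4 → k,
        eval P (X 3 ^ 2 - rename ![0, 1, 2] b) = 0 →
        (∀ i : Fin 4, eval P (pderiv i (X 3 ^ 2 - rename ![0, 1, 2] b)) = 0) →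
        P = 0)
    (Q C : MvPolynomial (Fin 2) k)
    (hQ : Q.IsHomogeneous 2) (hC : C.IsHomogeneous 3)
    (hΓ : aeval ![(X 0 : MvPolynomial (Fin 2) k), X 1, Q, C]
        (X 3 ^ 2 - rename ![0, 1, 2] b : MvPolynomial (Fin 4) k) = 0) :
    aeval ![(X 0 : MvPolynomial (Fin 2) k), X 1, Q, -C]
        (X 3 ^ 2 - rename ![0, 1, 2] b : MvPolynomial (Fin 4) k) = 0 ∧
    ∀ d : ℕ, 3 ≤ d →
      pieceRank k (Ideal.span {X 2 - rename ![0, 1] Q, X 3, rename ![0, 1] C}) d = 3 := by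
  -- expansion of the defining substitution
  have hcompb : ∀ E : MvPolynomial (Fin 2) k,
      aeval ![(X 0 : MvPolynomial (Fin 2) k), X 1, Q, E]
        (X 3 ^ 2 - rename ![0, 1, 2] b : MvPolynomial (Fin 4) k)
      = E ^ 2 - aeval ![(X 0 : MvPolynomial (Fin 2) k), X 1, Q] b := by
    intro E
    have hfun : (![(X 0 : MvPolynomial (Fin 2) k), X 1, Q, E] ∘ ![0, 1, 2] :
        Fin 3 → MvPolynomial (Fin 2) k) = ![X 0, X 1, Q] := by
      funext i; fin_cases i <;> rfl
    rw [map_sub, map_pow, aeval_X, aeval_rename, hfun]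
    norm_num
    rfl
  rw [hcompb] at hΓ
  have hB : (aeval ![(X 0 : MvPolynomial (Fin 2) k), X 1, Q] b) = C ^ 2 :=
    (sub_eq_zero.mp hΓ).symm
  constructor
  · rw [hcompb, hB, neg_sq, sub_self]
  · -- First: C ≠ 0, via smoothness.
    have hCne : C ≠ 0 := by
      intro hC0
      have hB0 : (aeval ![(X 0 : MvPolynomial (Fin 2) k), X 1, Q] b) = 0 := by
        rw [hB, hC0]; ring
      -- b is divisible by z - Q
      have hcomp3 : ∀ p : MvPolynomial (Fin 3) k,
          rename (![0,1] : Fin 2 → Fin 3) (aeval ![(X 0 : MvPolynomial (Fin 2) k), X 1, Q] p)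
            = aeval ![(X 0 : MvPolynomial (Fin 3) k), X 1, rename ![0,1] Q] p := by
        intro p
        have hc : ((rename (![0,1] : Fin 2 → Fin 3)).comp
              (aeval ![(X 0 : MvPolynomial (Fin 2) k), X 1, Q]) :
              MvPolynomial (Fin 3) k →ₐ[k] MvPolynomial (Fin 3) k)
            = aeval ![(X 0 : MvPolynomial (Fin 3) k), X 1, rename ![0,1] Q] := by
          apply MvPolynomial.algHom_ext
          intro i
          fin_cases i <;> simp
        have := congrArg (fun F : MvPolynomial (Fin 3) k →ₐ[k] MvPolynomial (Fin 3) k => F p) hc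
        simpa using this
      have hzq : b ∈ Ideal.span {(X 2 - rename ![0,1] Q : MvPolynomial (Fin 3) k)} := by
        have h1 := aux_sub_aeval_mem
          (G := ![(X 0 : MvPolynomial (Fin 3) k), X 1, rename ![0,1] Q])
          (J := Ideal.span {(X 2 - rename ![0,1] Q : MvPolynomial (Fin 3) k)})
          (by
            intro i
            fin_cases i
            · simp
            · simp
            · exact Ideal.subset_span (by simp)) b
        rwa [← hcomp3, hB0, map_zero, sub_zero] at h1
      obtain ⟨g, hg⟩ := Ideal.mem_span_singleton'.mp hzq
      -- homogeneity of z - Q in 3 variables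
      have hQ3wh : (rename (![0,1] : Fin 2 → Fin 3) Q).IsWeightedHomogeneous ![1,1,2] 2 := by
        have : rename (![0,1] : Fin 2 → Fin 3) Q
            = aeval (fun i : Fin 2 => (X (![0,1] i) : MvPolynomial (Fin 3) k)) Q := by
              rw [rename_eq_aeval]; rfl
        rw [this]
        apply aux_aeval_wh (w := (1 : Fin 2 → ℕ)) hQ
        intro i
        fin_cases i
        · simpa using isWeightedHomogeneous_X k ![1,1,2] (0 : Fin 3)
        · simpa using isWeightedHomogeneous_X k ![1,1,2] (1 : Fin 3)
      have hu3wh : (X 2 - rename ![0,1] Q : MvPolynomial (Fin 3) k).IsWeightedHomogeneous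
          ![1,1,2] 2 := by
        have h1 : (X 2 : MvPolynomial (Fin 3) k).IsWeightedHomogeneous ![1,1,2] 2 := by
          simpa using isWeightedHomogeneous_X k ![1,1,2] (2 : Fin 3)
        exact (weightedHomogeneousSubmodule k ![1,1,2] 2).sub_mem h1 hQ3wh
      -- replace g by its degree-4 part
      have hg4 : b = (X 2 - rename ![0,1] Q) * weightedHomogeneousComponent ![1,1,2] 4 g := by
        have hc := aux_component_mul (w := ![1,1,2]) hu3wh g 4
        have h24 : (2 + 4 : ℕ) = 6 := rfl
        rw [h24] at hc
        calc b = weightedHomogeneousComponent ![1,1,2] 6 b :=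
              hb.weightedHomogeneousComponent_same.symm
          _ = _ := by rw [← hg, mul_comm g _, hc]
      set g4 := weightedHomogeneousComponent ![1,1,2] 4 g with hg4def
      have hg4wh : g4.IsWeightedHomogeneous ![1,1,2] 4 :=
        weightedHomogeneousComponent_isWeightedHomogeneous 4 g
      -- γ = g4(x, y, Q)
      set γ := aeval ![(X 0 : MvPolynomial (Fin 2) k), X 1, Q] g4 with hγdef
      have hγh : γ.IsHomogeneous 4 := by
        apply aux_aeval_wh (w := ![1,1,2]) hg4wh
        intro i
        fin_cases i
        · simpa using isWeightedHomogeneous_X k (1 : Fin 2 → ℕ) (0 : Fin 2)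
        · simpa using isWeightedHomogeneous_X k (1 : Fin 2 → ℕ) (1 : Fin 2)
        · simp; exact hQ
      obtain ⟨pt, hpt0, hpteval⟩ := aux_root (by norm_num : (0:ℕ) < 4) hγh
      set P : Fin 4 → k := ![pt 0, pt 1, eval pt Q, 0] with hPdef
      have hP3 : P 3 = 0 := rfl
      have hPu : eval P (X 2 - rename (![0,1] : Fin 2 → Fin 4) Q) = 0 := by
        rw [map_sub, eval_X, eval_rename]
        have : (P ∘ (![0,1] : Fin 2 → Fin 4)) = pt := by
          funext i; fin_cases i <;> rfl
        rw [this]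
        show eval pt Q - eval pt Q = 0
        ring
      have hPg4 : eval P (rename (![0,1,2] : Fin 3 → Fin 4) g4) = 0 := by
        rw [eval_rename]
        have h1 : (P ∘ (![0,1,2] : Fin 3 → Fin 4)) = ![pt 0, pt 1, eval pt Q] := by
          funext i; fin_cases i <;> rfl
        rw [h1]
        have hc : ((MvPolynomial.aeval pt : MvPolynomial (Fin 2) k →ₐ[k] k).comp
              (aeval ![(X 0 : MvPolynomial (Fin 2) k), X 1, Q]) :
              MvPolynomial (Fin 3) k →ₐ[k] k)
            = aeval ![pt 0, pt 1, eval pt Q] := by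
          apply MvPolynomial.algHom_ext
          intro i
          fin_cases i <;> simp [aux_aeval_eq_eval]
        have h2 := congrArg (fun F : MvPolynomial (Fin 3) k →ₐ[k] k => F g4) hc
        simp only [AlgHom.comp_apply] at h2
        rw [← aux_aeval_eq_eval, ← h2, ← hγdef, aux_aeval_eq_eval, hpteval]
      -- f = X3² - (X2 - Q)·g4 after rename
      have hfeq : (X 3 ^ 2 - rename ![0,1,2] b : MvPolynomial (Fin 4) k)
          = X 3 * X 3 - (X 2 - rename (![0,1] : Fin 2 → Fin 4) Q)
              * rename (![0,1,2] : Fin 3 → Fin 4) g4 := by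
        rw [hg4, map_mul, map_sub, rename_X, rename_rename]
        have : ((![0,1,2] : Fin 3 → Fin 4) ∘ (![0,1] : Fin 2 → Fin 3)) = ![0,1] := by
          funext i; fin_cases i <;> rfl
        rw [this, sq]
        norm_num
        left; rfl
      have hfP : eval P (X 3 ^ 2 - rename ![0, 1, 2] b) = 0 := by
        rw [hfeq]
        simp [hPu, hPg4, hP3]
      have hdP : ∀ i : Fin 4, eval P (pderiv i (X 3 ^ 2 - rename ![0, 1, 2] b)) = 0 := by
        intro i
        rw [hfeq, map_sub, pderiv_mul, pderiv_mul]
        simp [hPu, hPg4, hP3]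
      have hP0 := hsmooth P hfP hdP
      obtain ⟨j, hj⟩ := Function.ne_iff.mp hpt0
      apply hj
      fin_cases j
      · have := congrFun hP0 0; simpa [hPdef] using this
      · have := congrFun hP0 1; simpa [hPdef] using this
    -- Part 2: the intersection degree computation.
    intro d hd
    set ψ := (aeval ![(X 0 : MvPolynomial (Fin 2) k), X 1, Q, 0] :
        MvPolynomial (Fin 4) k →ₐ[k] MvPolynomial (Fin 2) k) with hψdef
    have hcomp1 : ∀ r : MvPolynomial (Fin 2) k, ψ (rename (![0,1] : Fin 2 → Fin 4) r) = r := by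
      intro r
      rw [hψdef, aeval_rename]
      have hfe : (![(X 0 : MvPolynomial (Fin 2) k), X 1, Q, 0] ∘ (![0,1] : Fin 2 → Fin 4)) = X := by
        funext i; fin_cases i <;> rfl
      rw [hfe, aeval_X_left, AlgHom.id_apply]
    have hgens4 : ∀ i : Fin 4,
        ((![(X 0 : MvPolynomial (Fin 2) k), X 1, Q, 0]) i).IsWeightedHomogeneous 1
          (![1,1,2,3] i) := by
      intro i; fin_cases i
      · simpa using isWeightedHomogeneous_X k (1 : Fin 2 → ℕ) (0 : Fin 2)
      · simpa using isWeightedHomogeneous_X k (1 : Fin 2 → ℕ) (1 : Fin 2)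
      · simp; exact hQ
      · simpa using isWeightedHomogeneous_zero k (1 : Fin 2 → ℕ) 3
    have hmem : ∀ p ∈ weightedHomogeneousSubmodule k ![1,1,2,3] d,
        ψ.toLinearMap p ∈ homogeneousSubmodule (Fin 2) k d := by
      intro p hp
      exact aux_aeval_wh (w := ![1,1,2,3]) hp _ hgens4
    haveI := aux_findim (k := k) d
    haveI := aux_findim (k := k) (d - 3)
    have hmulmem : ∀ q : homogeneousSubmodule (Fin 2) k (d-3),
        (LinearMap.mulLeft k C) ((homogeneousSubmodule (Fin 2) k (d-3)).subtype q)
          ∈ homogeneousSubmodule (Fin 2) k d := by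
      intro q
      have h1 : (C * (q : MvPolynomial (Fin 2) k)).IsHomogeneous (3 + (d - 3)) := hC.mul q.2
      have h2 : 3 + (d - 3) = d := by omega
      rw [h2] at h1
      exact h1
    set mulC : homogeneousSubmodule (Fin 2) k (d-3) →ₗ[k] homogeneousSubmodule (Fin 2) k d :=
      LinearMap.codRestrict _
        ((LinearMap.mulLeft k C) ∘ₗ (homogeneousSubmodule (Fin 2) k (d-3)).subtype) hmulmem
      with hmulCdef
    have hmulCval : ∀ q : homogeneousSubmodule (Fin 2) k (d-3),
        (mulC q : MvPolynomial (Fin 2) k) = C * q := by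
      intro q; rw [hmulCdef]; rfl
    have hinj : Function.Injective mulC := by
      intro q1 q2 h
      have h2 : C * (q1 : MvPolynomial (Fin 2) k) = C * q2 := by
        rw [← hmulCval, ← hmulCval, h]
      exact Subtype.ext (mul_left_cancel₀ hCne h2)
    set L := (LinearMap.range mulC).mkQ ∘ₗ (ψ.toLinearMap.restrict hmem) with hLdef
    have hLsurj : Function.Surjective L := by
      intro t
      obtain ⟨⟨r, hr⟩, rfl⟩ := Submodule.Quotient.mk_surjective _ t
      have hrwh : (rename (![0,1] : Fin 2 → Fin 4) r).IsWeightedHomogeneous ![1,1,2,3] d := by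
        have he : rename (![0,1] : Fin 2 → Fin 4) r
            = aeval (fun i : Fin 2 => (X ((![0,1] : Fin 2 → Fin 4) i) :
                MvPolynomial (Fin 4) k)) r := by
              rw [rename_eq_aeval]; rfl
        rw [he]
        apply aux_aeval_wh (w := (1 : Fin 2 → ℕ)) hr
        intro i; fin_cases i
        · simpa using isWeightedHomogeneous_X k ![1,1,2,3] (0 : Fin 4)
        · simpa using isWeightedHomogeneous_X k ![1,1,2,3] (1 : Fin 4)
      refine ⟨⟨rename ![0,1] r, hrwh⟩, ?_⟩
      have hval : (ψ.toLinearMap.restrict hmem) ⟨rename ![0,1] r, hrwh⟩ = ⟨r, hr⟩ :=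
        Subtype.ext (by simpa [LinearMap.restrict_apply] using hcomp1 r)
      rw [hLdef, LinearMap.comp_apply, hval, Submodule.mkQ_apply]
    have hψu' : ψ (X 2 - rename (![0,1] : Fin 2 → Fin 4) Q) = 0 := by
      rw [map_sub, hcomp1 Q]
      have h2 : ψ (X 2) = Q := by rw [hψdef]; simp
      rw [h2, sub_self]
    have hψ3 : ψ (X 3) = 0 := by rw [hψdef]; simp
    have hψC : ψ (rename (![0,1] : Fin 2 → Fin 4) C) = C := hcomp1 C
    have hIle : Ideal.span {(X 2 - rename ![0,1] Q : MvPolynomial (Fin 4) k), X 3,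
        rename ![0,1] C} ≤ Ideal.comap ψ (Ideal.span {C}) := by
      rw [Ideal.span_le]
      rintro x hx
      simp only [Set.mem_insert_iff, Set.mem_singleton_iff] at hx
      rcases hx with rfl | rfl | rfl
      · simp only [SetLike.mem_coe, Ideal.mem_comap, hψu']
        exact Ideal.zero_mem _
      · simp only [SetLike.mem_coe, Ideal.mem_comap, hψ3]
        exact Ideal.zero_mem _
      · simp only [SetLike.mem_coe, Ideal.mem_comap, hψC]
        exact Ideal.subset_span rfl
    have hcomp2 : ∀ x : MvPolynomial (Fin 4) k,
        rename (![0,1] : Fin 2 → Fin 4) (ψ x)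
          = aeval ![(X 0 : MvPolynomial (Fin 4) k), X 1, rename ![0,1] Q, 0] x := by
      intro x
      have hce : ((rename (![0,1] : Fin 2 → Fin 4)).comp ψ :
            MvPolynomial (Fin 4) k →ₐ[k] MvPolynomial (Fin 4) k)
          = aeval ![(X 0 : MvPolynomial (Fin 4) k), X 1, rename ![0,1] Q, 0] := by
        apply MvPolynomial.algHom_ext
        intro i
        fin_cases i <;> simp [hψdef]
      have h2 := congrArg
        (fun F : MvPolynomial (Fin 4) k →ₐ[k] MvPolynomial (Fin 4) k => F x) hce
      simpa using h2
    have hker : LinearMap.ker L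
        = Submodule.comap (weightedHomogeneousSubmodule k ![1,1,2,3] d).subtype
            ((Ideal.span {(X 2 - rename ![0,1] Q : MvPolynomial (Fin 4) k), X 3,
              rename ![0,1] C}).restrictScalars k) := by
      ext pp
      obtain ⟨p, hp⟩ := pp
      have hψpmem : ψ p ∈ homogeneousSubmodule (Fin 2) k d := hmem p hp
      constructor
      · intro h
        rw [LinearMap.mem_ker, hLdef, LinearMap.comp_apply, Submodule.mkQ_apply,
          Submodule.Quotient.mk_eq_zero] at h
        obtain ⟨⟨q, hq⟩, hqeq⟩ := h
        have hCq : C * q = ψ p := by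
          have h2 := congrArg Subtype.val hqeq
          rw [hmulCval] at h2
          simpa [LinearMap.restrict_apply] using h2
        show p ∈ Ideal.span {(X 2 - rename ![0,1] Q : MvPolynomial (Fin 4) k), X 3,
          rename ![0,1] C}
        have h1 : p - aeval ![(X 0 : MvPolynomial (Fin 4) k), X 1, rename ![0,1] Q, 0] p
            ∈ Ideal.span {(X 2 - rename ![0,1] Q : MvPolynomial (Fin 4) k), X 3,
              rename ![0,1] C} := by
          apply aux_sub_aeval_mem
          intro i
          fin_cases i
          · simpa using Ideal.zero_mem _
          · simpa using Ideal.zero_mem _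
          · exact Ideal.subset_span (by simp)
          · simpa using Ideal.subset_span (show (X 3 : MvPolynomial (Fin 4) k) ∈
              {(X 2 - rename ![0,1] Q : MvPolynomial (Fin 4) k), X 3, rename ![0,1] C} by simp)
        have h2 : p = (p - aeval ![(X 0 : MvPolynomial (Fin 4) k), X 1, rename ![0,1] Q, 0] p)
            + rename (![0,1] : Fin 2 → Fin 4) (C * q) := by
          rw [hCq, hcomp2 p]; ring
        rw [h2]
        apply add_mem h1
        rw [map_mul]
        exact Ideal.mul_mem_right _ _ (Ideal.subset_span (by simp))
      · intro h
        have hpI : p ∈ Ideal.span {(X 2 - rename ![0,1] Q : MvPolynomial (Fin 4) k), X 3,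
            rename ![0,1] C} := h
        have h1 : ψ p ∈ Ideal.span {C} := hIle hpI
        obtain ⟨qq, hqq⟩ := Ideal.mem_span_singleton'.mp h1
        rw [LinearMap.mem_ker, hLdef, LinearMap.comp_apply, Submodule.mkQ_apply,
          Submodule.Quotient.mk_eq_zero]
        have hq3 : weightedHomogeneousComponent (1 : Fin 2 → ℕ) (d - 3) qq
            ∈ homogeneousSubmodule (Fin 2) k (d-3) :=
          weightedHomogeneousComponent_mem (1 : Fin 2 → ℕ) qq (d - 3)
        refine ⟨⟨weightedHomogeneousComponent (1 : Fin 2 → ℕ) (d-3) qq, hq3⟩, ?_⟩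
        apply Subtype.ext
        have hcc := aux_component_mul (w := (1 : Fin 2 → ℕ))
          (show C.IsWeightedHomogeneous 1 3 from hC) qq (d - 3)
        rw [show 3 + (d - 3) = d by omega] at hcc
        have hsame : weightedHomogeneousComponent (1 : Fin 2 → ℕ) d (ψ p) = ψ p :=
          IsWeightedHomogeneous.weightedHomogeneousComponent_same hψpmem
        rw [mul_comm] at hqq
        calc (mulC ⟨weightedHomogeneousComponent (1 : Fin 2 → ℕ) (d-3) qq, hq3⟩ :
              MvPolynomial (Fin 2) k)
            = C * weightedHomogeneousComponent (1 : Fin 2 → ℕ) (d-3) qq := hmulCval _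
          _ = weightedHomogeneousComponent (1 : Fin 2 → ℕ) d (C * qq) := hcc.symm
          _ = ψ p := by rw [hqq, hsame]
          _ = ((ψ.toLinearMap.restrict hmem) ⟨p, hp⟩ : MvPolynomial (Fin 2) k) := by
              simp [LinearMap.restrict_apply]
    have e1 := (Submodule.quotEquivOfEq _ _ hker.symm).trans
      (L.quotKerEquivOfSurjective hLsurj)
    unfold pieceRank
    rw [LinearEquiv.finrank_eq e1]
    have hqr := Submodule.finrank_quotient_add_finrank (LinearMap.range mulC)
    have hrr := LinearMap.finrank_range_of_inj hinj
    have h1 := aux_finrank (k := k) d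
    have h3 := aux_finrank (k := k) (d - 3)
    omega
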